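/- Let P be an n×n real row-stochastic matrix and let P* be the Cesàro limit of P^m. Then the matrix I − P + P* is invertible. -/

import Mathlib

open Finset Filter Topology Matrix

/-- A square real matrix is row-stochastic if all entries are nonnegative and
every row sums to 1. -/
def RowStochastic {n : ℕ} (P : Matrix (Fin n) (Fin n) ℝ) : Prop :=
  (∀ i j, 0 ≤ P i j) ∧ ∀ i, ∑ j, P i j = 1

lemma rowStochastic_pow {n : ℕ} {P : Matrix (Fin n) (Fin n) ℝ} (hP : RowStochastic P) (k : ℕ) :
    RowStochastic (P ^ k) := by
  induction k with
  | zero =>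
    refine ⟨fun i j => ?_, fun i => ?_⟩
    · simp only [pow_zero, Matrix.one_apply]
      split <;> norm_num
    · simp [pow_zero, Matrix.one_apply]
  | succ k ih =>
    rw [pow_succ]
    refine ⟨fun i j => ?_, fun i => ?_⟩
    · rw [Matrix.mul_apply]
      exact Finset.sum_nonneg fun l _ => mul_nonneg (ih.1 i l) (hP.1 l j)
    · simp_rw [Matrix.mul_apply]
      rw [Finset.sum_comm]
      simp_rw [← Finset.mul_sum, hP.2, mul_one]
      exact ih.2 i

lemma rowStochastic_entry_le_one {n : ℕ} {Q : Matrix (Fin n) (Fin n) ℝ}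
    (hQ : RowStochastic Q) (i j : Fin n) : Q i j ≤ 1 := by
  calc Q i j ≤ ∑ l, Q i l :=
        Finset.single_le_sum (fun l _ => hQ.1 i l) (Finset.mem_univ j)
    _ = 1 := hQ.2 i

lemma sum_mulVec {n : ℕ} (s : Finset ℕ) (f : ℕ → Matrix (Fin n) (Fin n) ℝ)
    (x : Fin n → ℝ) : (∑ k ∈ s, f k) *ᵥ x = ∑ k ∈ s, (f k *ᵥ x) := by
  induction s using Finset.induction_on with
  | empty => simp
  | insert _ _ h ih => simp [Finset.sum_insert h, Matrix.add_mulVec, ih]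

/-- if `Pstar` is the Cesàro limit of the powers of a row-stochastic
matrix `P`, then the matrix `I - P + Pstar` is invertible. -/
theorem id_sub_add_cesaro_invertible {n : ℕ} (P : Matrix (Fin n) (Fin n) ℝ)
    (hP : RowStochastic P) (Pstar : Matrix (Fin n) (Fin n) ℝ)
    (hPstar : Tendsto (fun m : ℕ => (m : ℝ)⁻¹ • ∑ k ∈ Finset.range m, P ^ k)
      atTop (𝓝 Pstar)) :
    IsUnit (1 - P + Pstar) := by
  set A : ℕ → Matrix (Fin n) (Fin n) ℝ :=
    fun m => (m : ℝ)⁻¹ • ∑ k ∈ Finset.range m, P ^ k with hA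
  -- (1/m) • (P^m - 1) → 0
  have hzero : Tendsto (fun m : ℕ => (m : ℝ)⁻¹ • (P ^ m - 1)) atTop (𝓝 0) := by
    refine tendsto_pi_nhds.mpr ?_
    intro i
    rw [tendsto_pi_nhds]
    intro j
    have hb : ∀ m : ℕ, ‖((m : ℝ)⁻¹ • (P ^ m - 1)) i j‖ ≤ (m : ℝ)⁻¹ * 2 := by
      intro m
      have h1 : 0 ≤ (P ^ m) i j := (rowStochastic_pow hP m).1 i j
      have h2 : (P ^ m) i j ≤ 1 := rowStochastic_entry_le_one (rowStochastic_pow hP m) i j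
      have h3 : (0:ℝ) ≤ (1 : Matrix (Fin n) (Fin n) ℝ) i j := by
        rw [Matrix.one_apply]; split <;> norm_num
      have h4 : (1 : Matrix (Fin n) (Fin n) ℝ) i j ≤ 1 := by
        rw [Matrix.one_apply]; split <;> norm_num
      have : ((m : ℝ)⁻¹ • (P ^ m - 1)) i j
          = (m : ℝ)⁻¹ * ((P ^ m) i j - (1 : Matrix (Fin n) (Fin n) ℝ) i j) := by
        simp [Matrix.smul_apply, Matrix.sub_apply]
      rw [this, norm_mul]
      have hm : ‖(m : ℝ)⁻¹‖ = (m : ℝ)⁻¹ := by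
        rw [Real.norm_eq_abs, abs_of_nonneg]; positivity
      rw [hm]
      refine mul_le_mul_of_nonneg_left ?_ (by positivity)
      rw [Real.norm_eq_abs, abs_sub_le_iff]
      constructor <;> linarith
    have hg : Tendsto (fun m : ℕ => (m : ℝ)⁻¹ * 2) atTop (𝓝 0) := by
      simpa using tendsto_inv_atTop_nhds_zero_nat.mul_const (2:ℝ)
    have h0 : Tendsto (fun m : ℕ => ((m : ℝ)⁻¹ • (P ^ m - 1)) i j) atTop (𝓝 0) :=
      squeeze_zero_norm hb hg
    simpa using h0
  -- Pstar * P = Pstar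
  have hPP : Pstar * P = Pstar := by
    have hid : ∀ m : ℕ, A m * P = A m + (m : ℝ)⁻¹ • (P ^ m - 1) := by
      intro m
      have := geom_sum_mul P m
      have h : (∑ k ∈ Finset.range m, P ^ k) * P
          = (∑ k ∈ Finset.range m, P ^ k) + (P ^ m - 1) := by
        have := geom_sum_mul P m
        rw [mul_sub, mul_one] at this
        linear_combination (norm := abel) this
      rw [hA]
      rw [Matrix.smul_mul, h, smul_add]
    have h1 : Tendsto (fun m => A m * P) atTop (𝓝 (Pstar * P)) :=
      hPstar.mul tendsto_const_nhds
    have h2 : Tendsto (fun m => A m * P) atTop (𝓝 (Pstar + 0)) := by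
      simp_rw [hid]
      exact hPstar.add hzero
    rw [add_zero] at h2
    exact tendsto_nhds_unique h1 h2
  -- Pstar * P^k = Pstar
  have hPpow : ∀ k : ℕ, Pstar * P ^ k = Pstar := by
    intro k
    induction k with
    | zero => simp
    | succ k ih => rw [pow_succ, ← mul_assoc, ih, hPP]
  -- Pstar * Pstar = Pstar
  have hPsq : Pstar * Pstar = Pstar := by
    have h1 : Tendsto (fun m => Pstar * A m) atTop (𝓝 (Pstar * Pstar)) :=
      tendsto_const_nhds.mul hPstar
    have h2 : ∀ᶠ m : ℕ in atTop, Pstar * A m = Pstar := by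
      filter_upwards [eventually_ge_atTop 1] with m hm
      rw [hA]
      simp only [Matrix.mul_smul, Finset.mul_sum]
      simp_rw [hPpow]
      rw [Finset.sum_const, Finset.card_range, ← Nat.cast_smul_eq_nsmul ℝ, smul_smul,
        inv_mul_cancel₀ (by exact_mod_cast Nat.one_le_iff_ne_zero.mp hm), one_smul]
    have h3 : Tendsto (fun m => Pstar * A m) atTop (𝓝 Pstar) :=
      Tendsto.congr' (by filter_upwards [h2] with m hm using hm.symm) tendsto_const_nhds
    exact tendsto_nhds_unique h1 h3
  -- injectivity of mulVec
  rw [← Matrix.mulVec_injective_iff_isUnit]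
  set M : Matrix (Fin n) (Fin n) ℝ := 1 - P + Pstar with hM
  have hker : ∀ x : Fin n → ℝ, M *ᵥ x = 0 → x = 0 := by
    intro x hx
    -- Pstar * M = Pstar
    have hPM : Pstar * M = Pstar := by
      rw [hM, mul_add, mul_sub, mul_one, hPP, hPsq]
      abel
    have hPx : Pstar *ᵥ x = 0 := by
      have := congrArg (fun v => Pstar *ᵥ v) hx
      simpa [Matrix.mulVec_mulVec, hPM] using this
    have hfix : P *ᵥ x = x := by
      have hx' : x - P *ᵥ x + Pstar *ᵥ x = 0 := by
        have := hx
        rw [hM, Matrix.add_mulVec, Matrix.sub_mulVec, Matrix.one_mulVec] at this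
        exact this
      rw [hPx, add_zero, sub_eq_zero] at hx'
      exact hx'.symm
    have hfixpow : ∀ k : ℕ, P ^ k *ᵥ x = x := by
      intro k
      induction k with
      | zero => simp
      | succ k ih => rw [pow_succ, ← Matrix.mulVec_mulVec, hfix, ih]
    have h1 : Tendsto (fun m => A m *ᵥ x) atTop (𝓝 (Pstar *ᵥ x)) := by
      have hc : Continuous fun Q : Matrix (Fin n) (Fin n) ℝ => Q *ᵥ x :=
        (continuous_id.matrix_mulVec continuous_const)
      exact (hc.tendsto Pstar).comp hPstar
    have h2 : ∀ᶠ m : ℕ in atTop, A m *ᵥ x = x := by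
      filter_upwards [eventually_ge_atTop 1] with m hm
      rw [hA]
      simp only [Matrix.smul_mulVec, _root_.sum_mulVec]
      simp_rw [hfixpow]
      rw [Finset.sum_const, Finset.card_range, ← Nat.cast_smul_eq_nsmul ℝ, smul_smul,
        inv_mul_cancel₀ (by exact_mod_cast Nat.one_le_iff_ne_zero.mp hm), one_smul]
    have h3 : Tendsto (fun m => A m *ᵥ x) atTop (𝓝 x) :=
      Tendsto.congr' (by filter_upwards [h2] with m hm using hm.symm) tendsto_const_nhds
    have : Pstar *ᵥ x = x := tendsto_nhds_unique h1 h3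
    rw [← this, hPx]
  intro x y hxy
  have : M *ᵥ (x - y) = 0 := by
    rw [Matrix.mulVec_sub, hxy, sub_self]
  have := hker _ this
  exact sub_eq_zero.mp this
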